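/- Let k be an algebraically closed field and f = (f_1,...,f_m) ∈ k[t_1,...,t_n]^m almost surjective on k. Then k(f_1,...,f_m) ∩ k[t_1,...,t_n] = k[f_1,...,f_m]; that is, every polynomial that is a rational function of f_1,...,f_m is in fact a polynomial in f_1,...,f_m. -/

import Mathlib

open MvPolynomial

/-- `p` vanishes at every point of `A`. -/
def VanishesOn {k : Type*} [CommSemiring k] {m : ℕ} (A : Set (Fin m → k))
    (p : MvPolynomial (Fin m) k) : Prop :=
  ∀ a ∈ A, eval a p = 0

/-- The Zariski closure of `A ⊆ k^m` has dimension at most `d` (with `dim ∅ = -1`):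
for every index set `S` with more than `d` elements, the vanishing ideal of `A`
contains a nonzero polynomial supported on the variables in `S`. -/
def ZClosureDimLE {k : Type*} [CommSemiring k] {m : ℕ} (A : Set (Fin m → k)) (d : ℤ) : Prop :=
  ∀ S : Finset (Fin m), d < (S.card : ℤ) →
    ∃ p : MvPolynomial (Fin m) k, p ≠ 0 ∧
      p ∈ MvPolynomial.supported k (↑S : Set (Fin m)) ∧ VanishesOn A p

/-- The range of the polynomial map `k^n → k^m` induced by `f`. -/
def polyRange {k : Type*} [CommSemiring k] {m n : ℕ}
    (f : Fin m → MvPolynomial (Fin n) k) : Set (Fin m → k) :=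
  Set.range fun a : Fin n → k => fun i => eval a (f i)

/-- `f` is almost surjective on `k`: the Zariski closure of the complement of the range
of the induced map `k^n → k^m` has dimension at most `m - 2`. -/
def AlmostSurj {k : Type*} [CommSemiring k] {m n : ℕ}
    (f : Fin m → MvPolynomial (Fin n) k) : Prop :=
  ZClosureDimLE (polyRange f)ᶜ ((m : ℤ) - 2)

/-- `g` is determined by `f`. -/
def Determined {k : Type*} [CommSemiring k] {m n : ℕ}
    (f : Fin m → MvPolynomial (Fin n) k) (g : MvPolynomial (Fin n) k) : Prop :=
  ∀ a b : Fin n → k, (∀ i, eval a (f i) = eval b (f i)) → eval a g = eval b g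

/-- In a domain, `degreeOf` is additive on products of nonzero polynomials. -/
lemma aux_degreeOf_mul_eq {K : Type*} [CommRing K] [IsDomain K] {m : ℕ}
    (i : Fin m) {p q : MvPolynomial (Fin m) K} (hp : p ≠ 0) (hq : q ≠ 0) :
    degreeOf i (p * q) = degreeOf i p + degreeOf i q := by
  cases m with
  | zero => exact absurd i.isLt (Nat.not_lt_zero _)
  | succ m' =>
    set sw : Fin (m' + 1) ≃ Fin (m' + 1) := Equiv.swap i 0 with hsw
    have key : ∀ z : MvPolynomial (Fin (m' + 1)) K,
        degreeOf i z = (finSuccEquiv K m' (rename sw z)).natDegree := by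
      intro z
      rw [natDegree_finSuccEquiv]
      have : (0 : Fin (m' + 1)) = sw i := by simp [hsw]
      rw [this, degreeOf_rename_of_injective sw.injective]
    have hrp : rename (⇑sw) p ≠ 0 := fun h0 =>
      hp (rename_injective _ sw.injective (by simpa using h0))
    have hrq : rename (⇑sw) q ≠ 0 := fun h0 =>
      hq (rename_injective _ sw.injective (by simpa using h0))
    have hfp : finSuccEquiv K m' (rename sw p) ≠ 0 := by
      simpa using hrp
    have hfq : finSuccEquiv K m' (rename sw q) ≠ 0 := by
      simpa using hrq
    rw [key, key, key, map_mul, map_mul, Polynomial.natDegree_mul hfp hfq]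

lemma aux_degreeOf_eq_zero_of_not_mem_vars {K : Type*} [CommSemiring K] {m : ℕ}
    {i : Fin m} {p : MvPolynomial (Fin m) K} (h : i ∉ p.vars) : degreeOf i p = 0 := by
  rw [degreeOf_eq_sup]
  refine Nat.eq_zero_of_le_zero (Finset.sup_le fun d hd => ?_)
  by_contra hdi
  exact h ((mem_vars i).mpr ⟨d, hd, Finsupp.mem_support_iff.mpr (fun h0 => hdi (by omega))⟩)

lemma aux_exists_degreeOf_ne_zero {K : Type*} [Field K] {m : ℕ}
    {q : MvPolynomial (Fin m) K} (h0 : q ≠ 0) (hu : ¬IsUnit q) :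
    ∃ i, degreeOf i q ≠ 0 := by
  by_contra hc
  push_neg at hc
  have hvars : (q.vars : Set (Fin m)) ⊆ (∅ : Set (Fin m)) := by
    intro i hi
    obtain ⟨d, hd, hds⟩ := (mem_vars i).mp hi
    have := monomial_le_degreeOf i hd
    rw [hc i] at this
    exact absurd (Nat.le_zero.mp this) (Finsupp.mem_support_iff.mp hds)
  have hmem : q ∈ supported K (∅ : Set (Fin m)) := (mem_supported).mpr hvars
  rw [supported_empty] at hmem
  obtain ⟨c, hcq⟩ := Algebra.mem_bot.mp hmem
  have hc0 : c ≠ 0 := fun h => h0 (by rw [← hcq, h, map_zero])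
  exact hu (by rw [← hcq]; exact (isUnit_iff_ne_zero.mpr hc0).map (algebraMap K _))

lemma aux_dvd_of_vanish {k : Type*} [Field k] [IsAlgClosed k] {m : ℕ}
    {q h : MvPolynomial (Fin m) k} (hq : Prime q)
    (hv : ∀ y, eval y q = 0 → eval y h = 0) : q ∣ h := by
  have hmem : h ∈ MvPolynomial.vanishingIdeal k (MvPolynomial.zeroLocus k (Ideal.span {q})) := by
    rw [mem_vanishingIdeal_iff]
    intro x hx
    exact hv x (hx q (Ideal.subset_span rfl))
  rw [vanishingIdeal_zeroLocus_eq_radical] at hmem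
  have hpr : (Ideal.span {q}).IsPrime := (Ideal.span_singleton_prime hq.ne_zero).mpr hq
  rw [hpr.radical] at hmem
  exact Ideal.mem_span_singleton.mp hmem

lemma aux_eval_comp {k : Type*} [CommSemiring k] {m n : ℕ}
    (f : Fin m → MvPolynomial (Fin n) k) (a : Fin n → k) (z : MvPolynomial (Fin m) k) :
    eval (fun i => eval a (f i)) z = eval a (aeval f z) := by
  rw [aeval_def, algebraMap_eq, ← eval_assoc]
  rfl

theorem stmt6 {k : Type*} [Field k] [IsAlgClosed k] {m n : ℕ}
    (f : Fin m → MvPolynomial (Fin n) k) (h : AlmostSurj f) (g : MvPolynomial (Fin n) k) :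
    (∃ r s : MvPolynomial (Fin m) k, aeval f s ≠ 0 ∧ g * aeval f s = aeval f r) ↔
      ∃ p : MvPolynomial (Fin m) k, aeval f p = g := by
  constructor
  · rintro ⟨r, s, hs, hgs⟩
    refine UniqueFactorizationMonoid.induction_on_prime
      (P := fun s => ∀ r : MvPolynomial (Fin m) k,
        aeval f s ≠ 0 → g * aeval f s = aeval f r → ∃ p, aeval f p = g)
      s ?_ ?_ ?_ r hs hgs
    · intro r hs0 _
      exact absurd (map_zero (aeval f)) hs0
    · -- unit case
      intro x hx r hx0 hgx
      obtain ⟨v, hv⟩ := hx.exists_right_inv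
      refine ⟨r * v, ?_⟩
      have : aeval f x * aeval f v = 1 := by rw [← map_mul, hv, map_one]
      calc aeval f (r * v) = aeval f r * aeval f v := map_mul _ _ _
        _ = g * aeval f x * aeval f v := by rw [hgx]
        _ = g * (aeval f x * aeval f v) := by ring
        _ = g := by rw [this, mul_one]
    · -- prime step
      intro s₁ q hs₁0 hq ih r hqs hgqs
      -- q depends on some variable i
      obtain ⟨i, hi⟩ := aux_exists_degreeOf_ne_zero hq.ne_zero hq.not_unit
      -- get the auxiliary polynomial vanishing on the complement of the range
      obtain ⟨p, hp0, hpsup, hpv⟩ := h (Finset.univ.erase i) (by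
        have hcard : (Finset.univ.erase i).card = m - 1 := by
          rw [Finset.card_erase_of_mem (Finset.mem_univ i), Finset.card_univ, Fintype.card_fin]
        have hm : 1 ≤ m := i.pos
        rw [hcard]
        have : ((m - 1 : ℕ) : ℤ) = (m : ℤ) - 1 := by
          push_cast [Nat.cast_sub hm]; ring
        rw [this]; omega)
      -- q divides r * p
      have hdvd : q ∣ r * p := by
        refine aux_dvd_of_vanish hq ?_
        intro y hy
        by_cases hmemr : y ∈ polyRange f
        · obtain ⟨a, rfl⟩ := hmemr
          have hr0 : eval (fun i => eval a (f i)) r = 0 := by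
            rw [aux_eval_comp, ← hgqs, map_mul, map_mul, map_mul]
            have : eval a (aeval f q) = 0 := by rw [← aux_eval_comp]; exact hy
            rw [this]; ring
          rw [map_mul, hr0, zero_mul]
        · have : eval y p = 0 := hpv y hmemr
          rw [map_mul, this, mul_zero]
      rcases hq.2.2 r p hdvd with hqr | hqp
      · -- q ∣ r : cancel and use induction hypothesis
        obtain ⟨r₁, rfl⟩ := hqr
        have hq0 : aeval f q ≠ 0 := fun h0 => hqs (by rw [map_mul, h0, zero_mul])
        have hcancel : g * aeval f s₁ = aeval f r₁ := by
          apply mul_left_cancel₀ hq0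
          have := hgqs
          rw [map_mul, map_mul] at this
          calc aeval f q * (g * aeval f s₁) = g * (aeval f q * aeval f s₁) := by ring
            _ = aeval f q * aeval f r₁ := this
        have hs₁ : aeval f s₁ ≠ 0 := fun h0 => hqs (by rw [map_mul, h0, mul_zero])
        exact ih r₁ hs₁ hcancel
      · -- q ∣ p : impossible by the degree argument
        exfalso
        obtain ⟨c, rfl⟩ := hqp
        have hc0 : c ≠ 0 := fun h0 => hp0 (by rw [h0, mul_zero])
        have hdeg0 : degreeOf i (q * c) = 0 := by
          apply aux_degreeOf_eq_zero_of_not_mem_vars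
          intro hivars
          have := (mem_supported).mp hpsup hivars
          simp at this
        rw [aux_degreeOf_mul_eq i hq.ne_zero hc0] at hdeg0
        omega
  · rintro ⟨p, hp⟩
    exact ⟨p, 1, by simp, by rw [map_one, mul_one, hp]⟩
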